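/- Let H be a real Hilbert space, let A be a maximally monotone set-valued operator on H, let B : H → H be monotone and L-Lipschitz with L > 0, let ε > 0 and λ ∈ [ε, (1 − 3ε)/(3L)], and let J denote the resolvent of λA. Let x_0, x_{−1} ∈ H, define x_{k+1} = J(x_k − λB(x_k)) − λ(B(x_k) − B(x_{k−1})) for k ≥ 0, and set y_k = λB(x_k) and z_k = x_k + y_{k−1}. Then for every x ∈ H with −B(x) ∈ A(x), setting z = x + λB(x), the following Lyapunov decrease holds for all k ≥ 0: ‖z_{k+1} − z‖² + (1/3 + ε)‖x_{k+1} − x_k‖² ≤ ‖z_k − z‖² + (1/3)‖x_k − x_{k−1}‖². -/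
import Mathlib

open scoped RealInnerProductSpace

/-- A set-valued operator `A ⊆ H × H` is monotone. -/
def IsMonotoneOp {H : Type*} [NormedAddCommGroup H] [InnerProductSpace ℝ H]
    (A : Set (H × H)) : Prop :=
  ∀ p ∈ A, ∀ q ∈ A, (0 : ℝ) ≤ ⟪p.2 - q.2, p.1 - q.1⟫

/-- Maximal monotonicity. -/
def IsMaximalMonotoneOp {H : Type*} [NormedAddCommGroup H] [InnerProductSpace ℝ H]
    (A : Set (H × H)) : Prop :=
  IsMonotoneOp A ∧
    ∀ p : H × H, (∀ q ∈ A, (0 : ℝ) ≤ ⟪p.2 - q.2, p.1 - q.1⟫) → p ∈ A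

/-- The scaled operator `cA = {(x, c•u) : (x,u) ∈ A}`. -/
def smulOp {H : Type*} [NormedAddCommGroup H] [InnerProductSpace ℝ H]
    (c : ℝ) (A : Set (H × H)) : Set (H × H) :=
  (fun p : H × H => (p.1, c • p.2)) '' A

lemma ineq_scalar (ε D E S : ℝ) (hε : 0 < ε) (hε3 : ε < 1/3)
    (hS0 : 0 ≤ S) (hS : S ≤ (1/3 - ε) * E) :
    0 ≤ 3*S^2 - 4*D*S + (2/3 - ε)*D^2 + E^2/3 := by
  have ht : 0 < 1/3 - ε := by linarith
  have hc : 0 < 2/3 - ε := by linarith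
  have hpos : 0 < 3*(1/3-ε)^2*(2/3-ε) := by positivity
  have hsq : S^2 ≤ ((1/3-ε)*E)^2 := by
    have := mul_self_le_mul_self hS0 hS
    nlinarith
  have hid : 3*(1/3-ε)^2*(2/3-ε)*(3*S^2 - 4*D*S + (2/3-ε)*D^2 + E^2/3)
      = 3*(1/3-ε)^2*((2/3-ε)*D - 2*S)^2 + (2/3-ε)*((1/3-ε)^2*E^2 - S^2)
        + ε*(2-9*ε^2)*S^2 := by ring
  have h1 : 0 ≤ 3*(1/3-ε)^2*((2/3-ε)*D - 2*S)^2 := by positivity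
  have h2 : 0 ≤ (2/3-ε)*((1/3-ε)^2*E^2 - S^2) := by nlinarith
  have h9 : 0 < 2 - 9*ε^2 := by nlinarith [mul_pos hε hε, sq_nonneg ε]
  have h3 : 0 ≤ ε*(2-9*ε^2)*S^2 := by positivity
  nlinarith [hid, hpos, h1, h2, h3]

lemma ineq_vec {H : Type*} [NormedAddCommGroup H] [InnerProductSpace ℝ H]
    (ε : ℝ) (hε : 0 < ε) (hε3 : ε < 1/3)
    (d e g h q : H)
    (hM1 : (0:ℝ) ≤ ⟪(h - d) - (g + g), (q + d + g) - h⟫)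
    (hMB1 : (0:ℝ) ≤ ⟪g, q⟫)
    (hS : ‖g - h‖ ≤ (1/3 - ε) * ‖e‖) :
    ‖q + d + g‖^2 + (1/3 + ε)*‖d‖^2 ≤ ‖q + h‖^2 + (1/3)*‖e‖^2 := by
  have hid : ‖q + h‖^2 - ‖q + d + g‖^2 + (1/3)*‖e‖^2 - (1/3+ε)*‖d‖^2
      = 2*⟪(h - d) - (g + g), (q + d + g) - h⟫ + 2*⟪g,q⟫ + 3*‖g-h‖^2
        + 4*⟪d, g-h⟫ + (2/3-ε)*‖d‖^2 + (1/3)*‖e‖^2 := by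
    simp only [← real_inner_self_eq_norm_sq, inner_add_left, inner_add_right,
      inner_sub_left, inner_sub_right, real_inner_comm g d, real_inner_comm h d,
      real_inner_comm q d, real_inner_comm h g, real_inner_comm q g, real_inner_comm q h]
    ring
  have habs := abs_real_inner_le_norm d (g-h)
  have hip : -(‖d‖*‖g-h‖) ≤ ⟪d, g-h⟫ := by
    have := neg_abs_le (⟪d, g-h⟫ : ℝ); linarith
  have hG := ineq_scalar ε ‖d‖ ‖e‖ ‖g-h‖ hε hε3 (norm_nonneg _) hS
  nlinarith [hid, hM1, hMB1, hG, hip]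

theorem statement9
    {H : Type*} [NormedAddCommGroup H] [InnerProductSpace ℝ H] [CompleteSpace H]
    (A : Set (H × H)) (hA : IsMaximalMonotoneOp A)
    (B : H → H) (hBmono : ∀ u v : H, (0 : ℝ) ≤ ⟪B u - B v, u - v⟫)
    (L : ℝ) (hL : 0 < L) (hBlip : ∀ u v : H, ‖B u - B v‖ ≤ L * ‖u - v‖)
    (ε lam : ℝ) (hε : 0 < ε) (hlam1 : ε ≤ lam) (hlam2 : lam ≤ (1 - 3 * ε) / (3 * L))
    (J : H → H) (hJ : ∀ w : H, (J w, w - J w) ∈ smulOp lam A)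
    (x : ℤ → H)
    (hrec : ∀ k : ℤ, 0 ≤ k →
      x (k + 1) = J (x k - lam • B (x k)) - lam • (B (x k) - B (x (k - 1))))
    (p : H) (hp : (p, -B p) ∈ A)
    (k : ℤ) (hk : 0 ≤ k) :
    ‖(x (k + 1) + lam • B (x k)) - (p + lam • B p)‖ ^ 2
        + (1 / 3 + ε) * ‖x (k + 1) - x k‖ ^ 2 ≤
      ‖(x k + lam • B (x (k - 1))) - (p + lam • B p)‖ ^ 2
        + (1 / 3) * ‖x k - x (k - 1)‖ ^ 2 := by
  have hlam0 : 0 < lam := lt_of_lt_of_le hε hlam1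
  have h3L : 0 < 3 * L := by linarith
  have hlamL : lam * L ≤ 1/3 - ε := by
    have h' : lam * (3 * L) ≤ 1 - 3 * ε := (le_div_iff₀ h3L).mp hlam2
    nlinarith
  have hε3 : ε < 1/3 := by nlinarith [mul_pos hlam0 hL]
  -- the resolvent point
  obtain ⟨pr, hprA, hpr⟩ := hJ (x k - lam • B (x k))
  simp only [Prod.mk.injEq] at hpr
  obtain ⟨hpr1, hpr2⟩ := hpr
  have hmono := hA.1 pr hprA (p, -B p) hp
  have hM1' : (0:ℝ) ≤ ⟪((x k - lam • B (x k)) - J (x k - lam • B (x k))) + lam • B p,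
      J (x k - lam • B (x k)) - p⟫ := by
    have harg : lam • (pr.2 - -B p)
        = ((x k - lam • B (x k)) - J (x k - lam • B (x k))) + lam • B p := by
      rw [smul_sub, hpr2, smul_neg]; abel
    calc (0:ℝ) ≤ lam * ⟪pr.2 - -B p, pr.1 - p⟫ := mul_nonneg hlam0.le hmono
      _ = ⟪lam • (pr.2 - -B p), pr.1 - p⟫ := (real_inner_smul_left _ _ _).symm
      _ = _ := by rw [harg, hpr1]
  have hJw : J (x k - lam • B (x k))
      = x (k+1) + lam • B (x k) - lam • B (x (k-1)) := by
    rw [hrec k hk]; module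
  rw [hJw] at hM1'
  -- apply the vector lemma
  have hM1 : (0:ℝ) ≤ ⟪((lam • B (x (k-1)) - lam • B p) - (x (k+1) - x k))
        - ((lam • B (x k) - lam • B p) + (lam • B (x k) - lam • B p)),
      ((x k - p) + (x (k+1) - x k) + (lam • B (x k) - lam • B p))
        - (lam • B (x (k-1)) - lam • B p)⟫ := by
    have e1 : ((x k - lam • B (x k)) - (x (k+1) + lam • B (x k) - lam • B (x (k-1))))
        + lam • B p
        = ((lam • B (x (k-1)) - lam • B p) - (x (k+1) - x k))
          - ((lam • B (x k) - lam • B p) + (lam • B (x k) - lam • B p)) := by abel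
    have e2 : (x (k+1) + lam • B (x k) - lam • B (x (k-1))) - p
        = ((x k - p) + (x (k+1) - x k) + (lam • B (x k) - lam • B p))
          - (lam • B (x (k-1)) - lam • B p) := by abel
    rw [← e1, ← e2]; exact hM1'
  have hMB1 : (0:ℝ) ≤ ⟪lam • B (x k) - lam • B p, x k - p⟫ := by
    rw [← smul_sub, real_inner_smul_left]
    exact mul_nonneg hlam0.le (hBmono _ _)
  have hS : ‖(lam • B (x k) - lam • B p) - (lam • B (x (k-1)) - lam • B p)‖
      ≤ (1/3 - ε) * ‖x k - x (k-1)‖ := by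
    have e3 : (lam • B (x k) - lam • B p) - (lam • B (x (k-1)) - lam • B p)
        = lam • (B (x k) - B (x (k-1))) := by rw [smul_sub]; abel
    rw [e3, norm_smul, Real.norm_eq_abs, abs_of_pos hlam0]
    nlinarith [hBlip (x k) (x (k-1)), norm_nonneg (x k - x (k-1)),
      norm_nonneg (B (x k) - B (x (k-1)))]
  have key := ineq_vec ε hε hε3 (x (k+1) - x k) (x k - x (k-1))
    (lam • B (x k) - lam • B p) (lam • B (x (k-1)) - lam • B p) (x k - p)
    hM1 hMB1 hS
  have e4 : (x (k + 1) + lam • B (x k)) - (p + lam • B p)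
      = (x k - p) + (x (k+1) - x k) + (lam • B (x k) - lam • B p) := by abel
  have e5 : (x k + lam • B (x (k-1))) - (p + lam • B p)
      = (x k - p) + (lam • B (x (k-1)) - lam • B p) := by abel
  rw [e4, e5]
  linarith [key]
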